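/- Fix ε > 0 and constants 0 < c_m ≤ c_M. There exists a constant 𝔠 ≥ 1 depending only on ε, c_m, c_M with the following property: for every H > 0, every nondecreasing diffusion coefficient c : [0,H] → ℝ with c_m ≤ c(y) ≤ c_M, every μ > 0 and λ satisfying both λ ≥ (c_M + ε) μ² and λ/c_M − μ² > 1, every reduced eigenfunction u for (c, μ, λ), and all y₁ < y₂ in [0,H] with u'(y₁) = u'(y₂) = 0, one has u(y₁)² ≤ u(y₂)² ≤ 𝔠 · u(y₁)². In particular the successive extremal amplitudes of u are nondecreasing from 0 to H and their ratios are uniformly bounded. -/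

import Mathlib

open Set MeasureTheory Filter


lemma fub_core (a b : ℝ) (f g : ℝ → ℝ) (μ2 : Measure ℝ) [IsFiniteMeasure μ2]
    (hf : Integrable f μ2) (hg : IntegrableOn g (Set.Ioc a b)) :
    ∫ y in Set.Ioc a b, (∫ t, (Set.Ioc a y).indicator f t ∂μ2) * g y
      = ∫ t, (Set.Ioi a).indicator (fun t => f t * ∫ y in Set.Icc t b, g y) t ∂μ2 := by
  set μ1 : Measure ℝ := volume.restrict (Set.Ioc a b) with hμ1
  have hS : MeasurableSet {p : ℝ × ℝ | p.2 ∈ Set.Ioc a p.1} := by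
    apply MeasurableSet.inter
    · exact measurableSet_lt measurable_const measurable_snd
    · exact measurableSet_le measurable_snd measurable_fst
  have hKeq : (Function.uncurry fun y t => (Set.Ioc a y).indicator f t * g y)
      = {p : ℝ × ℝ | p.2 ∈ Set.Ioc a p.1}.indicator (fun p => g p.1 * f p.2) := by
    funext p
    simp only [Function.uncurry]
    by_cases hp : p.2 ∈ Set.Ioc a p.1
    · rw [Set.indicator_of_mem hp,
        Set.indicator_of_mem (show p ∈ {p : ℝ × ℝ | p.2 ∈ Set.Ioc a p.1} from hp), mul_comm]
    · rw [Set.indicator_of_notMem hp,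
        Set.indicator_of_notMem (show p ∉ {p : ℝ × ℝ | p.2 ∈ Set.Ioc a p.1} from hp), zero_mul]
  have hK : Integrable (Function.uncurry fun y t => (Set.Ioc a y).indicator f t * g y)
      (μ1.prod μ2) := by
    rw [hKeq]
    exact (hg.mul_prod hf).indicator hS
  have swap := MeasureTheory.integral_integral_swap hK
  calc ∫ y in Set.Ioc a b, (∫ t, (Set.Ioc a y).indicator f t ∂μ2) * g y
      = ∫ y, ∫ t, (Set.Ioc a y).indicator f t * g y ∂μ2 ∂μ1 := by
        refine setIntegral_congr_fun measurableSet_Ioc (fun y _ => ?_)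
        rw [← MeasureTheory.integral_mul_const]
    _ = ∫ t, ∫ y, (Set.Ioc a y).indicator f t * g y ∂μ1 ∂μ2 := swap
    _ = ∫ t, (Set.Ioi a).indicator (fun t => f t * ∫ y in Set.Icc t b, g y) t ∂μ2 := by
        refine integral_congr_ae (Filter.Eventually.of_forall fun t => ?_)
        by_cases ht : a < t
        · rw [Set.indicator_of_mem (by exact ht : t ∈ Set.Ioi a)]
          have h1 : ∀ y, (Set.Ioc a y).indicator f t * g y
              = (Set.Ici t).indicator (fun y => f t * g y) y := by
            intro y
            by_cases hy : t ≤ y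
            · rw [Set.indicator_of_mem (by exact hy : y ∈ Set.Ici t),
                Set.indicator_of_mem (Set.mem_Ioc.2 ⟨ht, hy⟩), mul_comm]
            · rw [Set.indicator_of_notMem (by exact hy : y ∉ Set.Ici t),
                Set.indicator_of_notMem (fun hc => hy hc.2), zero_mul]
          simp_rw [h1]
          rw [hμ1, MeasureTheory.integral_indicator measurableSet_Ici,
            Measure.restrict_restrict measurableSet_Ici]
          have h2 : Set.Ici t ∩ Set.Ioc a b = Set.Icc t b := by
            ext y; constructor
            · rintro ⟨h3, _, h5⟩; exact ⟨h3, h5⟩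
            · rintro ⟨h3, h4⟩; exact ⟨h3, ht.trans_le h3, h4⟩
          rw [h2, MeasureTheory.integral_const_mul]
        · rw [Set.indicator_of_notMem (by exact ht : t ∉ Set.Ioi a)]
          have h1 : ∀ y, (Set.Ioc a y).indicator f t * g y = 0 := by
            intro y
            rw [Set.indicator_of_notMem (fun hc => ht hc.1), zero_mul]
          simp_rw [h1, integral_zero]


lemma ibp (a b : ℝ) (hab : a ≤ b) (m g : ℝ → ℝ) (hm : Monotone m)
    (hg : IntegrableOn g (Set.Ioc a b)) :
    ∫ y in Set.Ioc a b, m y * g y =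
      hm.stieltjesFunction a * (∫ y in Set.Ioc a b, g y)
        + ∫ t in Set.Ioc a b, (∫ y in Set.Icc t b, g y) ∂hm.stieltjesFunction.measure := by
  set s := hm.stieltjesFunction with hs
  have hsfin : IsFiniteMeasure (s.measure.restrict (Set.Ioc a b)) := by
    constructor
    rw [Measure.restrict_apply_univ, s.measure_Ioc]
    exact ENNReal.ofReal_lt_top
  set μ2 := s.measure.restrict (Set.Ioc a b) with hμ2
  -- m = s a.e.
  have hae : ∀ᵐ x : ℝ, m x = s x := by
    have hD : (volume : Measure ℝ) {x : ℝ | ¬ContinuousAt m x} = 0 :=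
      (hm.countable_not_continuousAt).measure_zero _
    have h1 : ∀ᵐ x : ℝ, ContinuousAt m x := by
      rw [ae_iff]; exact hD
    refine h1.mono fun x hx => ?_
    rw [hs, hm.stieltjesFunction_eq,
      hm.continuousWithinAt_Ioi_iff_rightLim_eq.1 hx.continuousWithinAt]
  have step1 : ∫ y in Set.Ioc a b, m y * g y = ∫ y in Set.Ioc a b, s y * g y :=
    integral_congr_ae ((ae_restrict_of_ae hae).mono fun y hy => by dsimp only; rw [hy])
  -- integrability of (s - s a) * g
  have hsm : Measurable fun y => s y - s a := (s.mono.measurable).sub measurable_const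
  have hsg : Integrable (fun y => (s y - s a) * g y) (volume.restrict (Set.Ioc a b)) := by
    refine Integrable.bdd_mul (c := s b - s a) hg hsm.aestronglyMeasurable ?_
    refine (ae_restrict_iff' measurableSet_Ioc).2 (Filter.Eventually.of_forall fun y hy => ?_)
    rw [Real.norm_eq_abs, abs_of_nonneg (sub_nonneg.2 (s.mono hy.1.le))]
    exact sub_le_sub_right (s.mono hy.2) _
  have step2 : ∫ y in Set.Ioc a b, s y * g y
      = (∫ y in Set.Ioc a b, (s y - s a) * g y) + s a * ∫ y in Set.Ioc a b, g y := by
    have h1 : ∀ y, s y * g y = (s y - s a) * g y + s a * g y := by intro y; ring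
    simp_rw [h1]
    rw [integral_add hsg (hg.const_mul _), MeasureTheory.integral_const_mul]
  have hW : ∀ y ∈ Set.Ioc a b,
      s y - s a = ∫ t, (Set.Ioc a y).indicator (fun _ => (1:ℝ)) t ∂μ2 := by
    intro y hy
    rw [MeasureTheory.integral_indicator measurableSet_Ioc, hμ2,
      Measure.restrict_restrict measurableSet_Ioc,
      Set.inter_eq_self_of_subset_left (Set.Ioc_subset_Ioc_right hy.2),
      MeasureTheory.setIntegral_const, measureReal_def, s.measure_Ioc, smul_eq_mul, mul_one,
      ENNReal.toReal_ofReal (sub_nonneg.2 (s.mono hy.1.le))]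
  have step3 : ∫ y in Set.Ioc a b, (s y - s a) * g y
      = ∫ t in Set.Ioc a b, (∫ y in Set.Icc t b, g y) ∂s.measure := by
    have h1 : ∫ y in Set.Ioc a b, (s y - s a) * g y
        = ∫ y in Set.Ioc a b, (∫ t, (Set.Ioc a y).indicator (fun _ => (1:ℝ)) t ∂μ2) * g y :=
      setIntegral_congr_fun measurableSet_Ioc (fun y hy => by rw [← hW y hy])
    rw [h1, fub_core a b _ g μ2 (integrable_const 1) hg]
    simp_rw [one_mul]
    rw [MeasureTheory.integral_indicator measurableSet_Ioi, hμ2,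
      Measure.restrict_restrict measurableSet_Ioi,
      Set.inter_eq_self_of_subset_right (fun x hx => hx.1)]
  rw [step1, step2, step3, add_comm]


lemma sq_ident (a b : ℝ) (hab : a ≤ b) (f : ℝ → ℝ) (hf : IntegrableOn f (Set.Ioc a b)) :
    ∫ y in Set.Ioc a b, (∫ t in Set.Ioc a y, f t) * f y
      = (∫ t in Set.Ioc a b, f t) ^ 2 / 2 := by
  have hfin : IsFiniteMeasure (volume.restrict (Set.Ioc a b)) := by
    constructor
    rw [Measure.restrict_apply_univ]
    exact measure_Ioc_lt_top
  set μ2 := volume.restrict (Set.Ioc a b) with hμ2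
  set I := ∫ t in Set.Ioc a b, f t with hI
  set F := fun t => ∫ y in Set.Ioc a t, f y with hF
  -- rewrite LHS as fub_core LHS
  have h1 : ∫ y in Set.Ioc a b, F y * f y
      = ∫ y in Set.Ioc a b, (∫ t, (Set.Ioc a y).indicator f t ∂μ2) * f y := by
    refine setIntegral_congr_fun measurableSet_Ioc (fun y hy => ?_)
    rw [MeasureTheory.integral_indicator measurableSet_Ioc, hμ2,
      Measure.restrict_restrict measurableSet_Ioc,
      Set.inter_eq_self_of_subset_left (Set.Ioc_subset_Ioc_right hy.2)]
  have h2 : ∫ t, (Set.Ioi a).indicator (fun t => f t * ∫ y in Set.Icc t b, f y) t ∂μ2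
      = ∫ t in Set.Ioc a b, f t * (I - F t) := by
    rw [MeasureTheory.integral_indicator measurableSet_Ioi, hμ2,
      Measure.restrict_restrict measurableSet_Ioi,
      Set.inter_eq_self_of_subset_right (fun x hx => hx.1)]
    refine setIntegral_congr_fun measurableSet_Ioc (fun t ht => ?_)
    have h3 : ∫ y in Set.Icc t b, f y = ∫ y in Set.Ioc t b, f y :=
      integral_Icc_eq_integral_Ioc
    have h4 : I = F t + ∫ y in Set.Ioc t b, f y := by
      rw [hI, hF, ← MeasureTheory.setIntegral_union (Set.Ioc_disjoint_Ioc_of_le le_rfl)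
        measurableSet_Ioc (hf.mono_set (Set.Ioc_subset_Ioc_right ht.2))
        (hf.mono_set (Set.Ioc_subset_Ioc_left ht.1.le)),
        Set.Ioc_union_Ioc_eq_Ioc ht.1.le ht.2]
    rw [h3]
    have : ∫ y in Set.Ioc t b, f y = I - F t := by rw [h4]; ring
    rw [this]
  -- F is bounded and continuous strongly measurable on Icc a b
  have hfIcc : IntegrableOn f (Set.Icc a b) := by
    rw [integrableOn_Icc_iff_integrableOn_Ioc]; exact hf
  have hFc : ContinuousOn F (Set.Icc a b) := intervalIntegral.continuousOn_primitive hfIcc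
  have hFint : Integrable (fun t => f t * F t) μ2 := by
    have := Integrable.bdd_mul (c := ∫ y in Set.Ioc a b, |f y|) (μ := μ2) hf
      ((hFc.mono Set.Ioc_subset_Icc_self).aestronglyMeasurable measurableSet_Ioc) ?_
    · exact this.congr (Filter.Eventually.of_forall fun t => mul_comm _ _)
    · refine (ae_restrict_iff' measurableSet_Ioc).2 (Filter.Eventually.of_forall fun t ht => ?_)
      rw [Real.norm_eq_abs, hF]
      calc |∫ y in Set.Ioc a t, f y| ≤ ∫ y in Set.Ioc a t, |f y| := by
            simpa [Real.norm_eq_abs] using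
              MeasureTheory.norm_integral_le_integral_norm (μ := volume.restrict (Set.Ioc a t)) f
        _ ≤ ∫ y in Set.Ioc a b, |f y| := by
            refine setIntegral_mono_set (hf.abs) ?_ ?_
            · exact Filter.Eventually.of_forall fun y => abs_nonneg _
            · exact HasSubset.Subset.eventuallyLE (Set.Ioc_subset_Ioc_right ht.2)
  have key : ∫ y in Set.Ioc a b, F y * f y = ∫ t in Set.Ioc a b, f t * (I - F t) := by
    rw [h1, fub_core a b f f μ2 hf hf, h2]
  have expand : ∫ t in Set.Ioc a b, f t * (I - F t)
      = I * I - ∫ t in Set.Ioc a b, f t * F t := by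
    have : ∀ t, f t * (I - F t) = f t * I - f t * F t := fun t => by ring
    simp_rw [this]
    rw [integral_sub (hf.mul_const I) hFint, MeasureTheory.integral_mul_const]
  have hcomm : ∫ y in Set.Ioc a b, F y * f y = ∫ t in Set.Ioc a b, f t * F t :=
    setIntegral_congr_fun measurableSet_Ioc (fun y _ => mul_comm _ _)
  rw [hcomm] at key
  rw [hcomm]
  nlinarith [key, expand]


lemma ftc_icc (H : ℝ) (φ φ' : ℝ → ℝ)
    (hd : ∀ z ∈ Set.Icc (0:ℝ) H, HasDerivWithinAt φ (φ' z) (Set.Icc (0:ℝ) H) z)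
    (hc : ContinuousOn φ' (Set.Icc (0:ℝ) H))
    (x y : ℝ) (hx : x ∈ Set.Icc (0:ℝ) H) (hy : y ∈ Set.Icc (0:ℝ) H) (hxy : x ≤ y) :
    ∫ z in x..y, φ' z = φ y - φ x := by
  have hsub : Set.Icc x y ⊆ Set.Icc (0:ℝ) H := Set.Icc_subset_Icc hx.1 hy.2
  refine intervalIntegral.integral_eq_sub_of_hasDeriv_right_of_le hxy
    (fun z hz => ((hd z (hsub hz)).continuousWithinAt).mono hsub) (fun z hz => ?_) ?_
  · have hnb : Set.Icc (0:ℝ) H ∈ nhds z :=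
      mem_nhds_iff.2 ⟨Set.Ioo x y, fun w hw => hsub (Set.Ioo_subset_Icc_self hw),
        isOpen_Ioo, hz⟩
    exact (((hd z (hsub (Set.Ioo_subset_Icc_self hz))).hasDerivAt hnb)).hasDerivWithinAt
  · have : ContinuousOn φ' (Set.uIcc x y) := by
      rw [Set.uIcc_of_le hxy]; exact hc.mono hsub
    exact this.intervalIntegrable

/-- `u` (with derivative `u'`) is a reduced eigenfunction for `(c, μ, lam)` on `[0,H]`. -/
def ReducedEigenfunction (H : ℝ) (c : ℝ → ℝ) (μ lam : ℝ) (u u' : ℝ → ℝ) : Prop :=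
  (∀ y ∈ Set.Icc (0:ℝ) H, HasDerivWithinAt u (u' y) (Set.Icc (0:ℝ) H) y) ∧
  ContinuousOn u' (Set.Icc (0:ℝ) H) ∧
  (∀ y ∈ Set.Icc (0:ℝ) H, u' y = u' 0 - ∫ t in (0:ℝ)..y, (lam / c t - μ ^ 2) * u t) ∧
  (∃ y ∈ Set.Icc (0:ℝ) H, u y ≠ 0) ∧
  u 0 = 0 ∧ u H = 0

set_option maxHeartbeats 1000000 in
/-- For nondecreasing coefficients the successive extremal amplitudes are nondecreasing
and their ratios are bounded by a constant depending only on `ε, c_m, c_M`. -/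
theorem stmt11
    (ε c_m c_M : ℝ) (hε : 0 < ε) (hcm : 0 < c_m) (hcmM : c_m ≤ c_M) :
    ∃ C : ℝ, 1 ≤ C ∧
      ∀ (H : ℝ) (c u u' : ℝ → ℝ) (μ lam : ℝ),
        0 < H →
        Measurable c → (∀ y ∈ Set.Icc (0:ℝ) H, c_m ≤ c y ∧ c y ≤ c_M) →
        MonotoneOn c (Set.Icc (0:ℝ) H) →
        0 < μ → (c_M + ε) * μ ^ 2 ≤ lam → 1 < lam / c_M - μ ^ 2 →
        ReducedEigenfunction H c μ lam u u' →
        ∀ y₁ ∈ Set.Icc (0:ℝ) H, ∀ y₂ ∈ Set.Icc (0:ℝ) H,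
          y₁ < y₂ → u' y₁ = 0 → u' y₂ = 0 →
          (u y₁) ^ 2 ≤ (u y₂) ^ 2 ∧ (u y₂) ^ 2 ≤ C * (u y₁) ^ 2 := by
  refine ⟨1 + c_M * (c_M + ε) / (c_m * ε), ?_, ?_⟩
  · have hcM : (0:ℝ) < c_M := lt_of_lt_of_le hcm hcmM
    have h0 : (0:ℝ) ≤ c_M * (c_M + ε) / (c_m * ε) := by positivity
    linarith
  intro H c u u' μ lam hH hc hbounds hmono hμ hlam1 hlam2 hRE y₁ hy₁ y₂ hy₂ hy12 hu'1 hu'2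
  obtain ⟨hud, hu'c, hInt, -, -, -⟩ := hRE
  set q : ℝ → ℝ := fun t => lam / c t - μ ^ 2 with hqdef
  set f : ℝ → ℝ := fun t => (lam / c t - μ ^ 2) * u t with hfdef
  set g : ℝ → ℝ := fun t => q t * (2 * u t * u' t) with hgdef
  have hI0 : (0:ℝ) ∈ Set.Icc (0:ℝ) H := ⟨le_refl 0, hH.le⟩
  have hcM : (0:ℝ) < c_M := lt_of_lt_of_le hcm hcmM
  have hlam : 0 < lam := lt_of_lt_of_le (by positivity) hlam1
  have hu_cont : ContinuousOn u (Set.Icc 0 H) := fun z hz => (hud z hz).continuousWithinAt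
  have hcpos : ∀ t ∈ Set.Icc (0:ℝ) H, 0 < c t := fun t ht => hcm.trans_le (hbounds t ht).1
  have hqlb : ∀ t ∈ Set.Icc (0:ℝ) H, lam / c_M - μ ^ 2 ≤ q t := by
    intro t ht
    have h1 : lam / c_M ≤ lam / c t :=
      div_le_div_of_nonneg_left hlam.le (hcpos t ht) (hbounds t ht).2
    simp only [hqdef]; linarith
  have hqpos : ∀ t ∈ Set.Icc (0:ℝ) H, 0 < q t := by
    intro t ht
    exact lt_of_lt_of_le (by linarith) (hqlb t ht)
  have hqub : ∀ t ∈ Set.Icc (0:ℝ) H, q t ≤ lam / c_m := by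
    intro t ht
    have h1 : lam / c t ≤ lam / c_m :=
      div_le_div_of_nonneg_left hlam.le hcm (hbounds t ht).1
    have h2 : (0:ℝ) ≤ μ ^ 2 := sq_nonneg μ
    simp only [hqdef]; linarith
  have hq_anti : ∀ t ∈ Set.Icc (0:ℝ) H, ∀ s ∈ Set.Icc (0:ℝ) H, t ≤ s → q s ≤ q t := by
    intro t ht s hs hts
    have h1 : c t ≤ c s := hmono ht hs hts
    have h2 : lam / c s ≤ lam / c t :=
      div_le_div_of_nonneg_left hlam.le (hcpos t ht) h1
    simp only [hqdef]; linarith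
  obtain ⟨Cu, hCu⟩ := (isCompact_Icc (a := (0:ℝ)) (b := H)).exists_bound_of_continuousOn hu_cont
  obtain ⟨Cu', hCu'⟩ := (isCompact_Icc (a := (0:ℝ)) (b := H)).exists_bound_of_continuousOn hu'c
  have hCu0 : 0 ≤ Cu := le_trans (norm_nonneg _) (hCu 0 hI0)
  have hCu'0 : 0 ≤ Cu' := le_trans (norm_nonneg _) (hCu' 0 hI0)
  have hq_meas : Measurable q := (measurable_const.div hc).sub measurable_const
  have hsub : ∀ x y : ℝ, x ∈ Set.Icc (0:ℝ) H → y ∈ Set.Icc (0:ℝ) H →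
      Set.Ioc x y ⊆ Set.Icc (0:ℝ) H := by
    intro x y hx hy t ht
    exact ⟨hx.1.trans ht.1.le, ht.2.trans hy.2⟩
  have habs_u : ∀ t ∈ Set.Icc (0:ℝ) H, |u t| ≤ Cu := by
    intro t ht; have := hCu t ht; rwa [Real.norm_eq_abs] at this
  have habs_u' : ∀ t ∈ Set.Icc (0:ℝ) H, |u' t| ≤ Cu' := by
    intro t ht; have := hCu' t ht; rwa [Real.norm_eq_abs] at this
  have hqabs : ∀ t ∈ Set.Icc (0:ℝ) H, |q t| ≤ lam / c_m := by
    intro t ht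
    rw [abs_of_nonneg (hqpos t ht).le]
    exact hqub t ht
  have hf_int : ∀ x y : ℝ, x ∈ Set.Icc (0:ℝ) H → y ∈ Set.Icc (0:ℝ) H →
      IntegrableOn f (Set.Ioc x y) := by
    intro x y hx hy
    refine ⟨(hq_meas.aestronglyMeasurable.restrict).mul
      ((hu_cont.mono (hsub x y hx hy)).aestronglyMeasurable measurableSet_Ioc), ?_⟩
    refine HasFiniteIntegral.restrict_of_bounded (C := (lam / c_m) * Cu) measure_Ioc_lt_top ?_
    refine (ae_restrict_iff' measurableSet_Ioc).2 (Filter.Eventually.of_forall fun t ht => ?_)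
    have htH := hsub x y hx hy ht
    rw [Real.norm_eq_abs, hfdef]
    calc |(lam / c t - μ ^ 2) * u t| = |q t| * |u t| := by rw [abs_mul]
      _ ≤ (lam / c_m) * Cu :=
          mul_le_mul (hqabs t htH) (habs_u t htH) (abs_nonneg _) (by positivity)
  have hg_int : ∀ x y : ℝ, x ∈ Set.Icc (0:ℝ) H → y ∈ Set.Icc (0:ℝ) H →
      IntegrableOn g (Set.Ioc x y) := by
    intro x y hx hy
    have hcont2 : ContinuousOn (fun t => 2 * u t * u' t) (Set.Icc (0:ℝ) H) :=
      (continuousOn_const.mul hu_cont).mul hu'c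
    refine ⟨(hq_meas.aestronglyMeasurable.restrict).mul
      ((hcont2.mono (hsub x y hx hy)).aestronglyMeasurable measurableSet_Ioc), ?_⟩
    refine HasFiniteIntegral.restrict_of_bounded (C := (lam / c_m) * (2 * Cu * Cu'))
      measure_Ioc_lt_top ?_
    refine (ae_restrict_iff' measurableSet_Ioc).2 (Filter.Eventually.of_forall fun t ht => ?_)
    have htH := hsub x y hx hy ht
    rw [Real.norm_eq_abs, hgdef]
    calc |q t * (2 * u t * u' t)| = |q t| * (|2| * |u t| * |u' t|) := by
          rw [abs_mul, abs_mul, abs_mul]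
      _ ≤ (lam / c_m) * (2 * Cu * Cu') := by
          have h2 : |2| * |u t| * |u' t| ≤ 2 * Cu * Cu' := by
            rw [abs_two]
            have := habs_u t htH; have := habs_u' t htH
            nlinarith [abs_nonneg (u t), abs_nonneg (u' t)]
          exact mul_le_mul (hqabs t htH) h2
            (by positivity) (by positivity)
  have hmem : ∀ x y : ℝ, x ∈ Set.Icc (0:ℝ) H → y ∈ Set.Icc (0:ℝ) H →
      min x y ∈ Set.Icc (0:ℝ) H ∧ max x y ∈ Set.Icc (0:ℝ) H := by
    intro x y hx hy
    exact ⟨⟨le_min hx.1 hy.1, le_trans (min_le_left x y) hx.2⟩,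
      ⟨le_trans hx.1 (le_max_left x y), max_le hx.2 hy.2⟩⟩
  have hf_ii : ∀ x y : ℝ, x ∈ Set.Icc (0:ℝ) H → y ∈ Set.Icc (0:ℝ) H →
      IntervalIntegrable f volume x y := by
    intro x y hx hy
    rw [intervalIntegrable_iff]
    exact hf_int _ _ (hmem x y hx hy).1 (hmem x y hx hy).2
  have hg_ii : ∀ x y : ℝ, x ∈ Set.Icc (0:ℝ) H → y ∈ Set.Icc (0:ℝ) H →
      IntervalIntegrable g volume x y := by
    intro x y hx hy
    rw [intervalIntegrable_iff]
    exact hg_int _ _ (hmem x y hx hy).1 (hmem x y hx hy).2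
  have hF : ∀ x ∈ Set.Icc (0:ℝ) H, ∀ y ∈ Set.Icc (0:ℝ) H,
      u' y = u' x - ∫ t in x..y, f t := by
    intro x hx y hy
    have h1 := hInt y hy
    have h2 := hInt x hx
    have h3 : ∫ t in (0:ℝ)..y, f t = (∫ t in (0:ℝ)..x, f t) + ∫ t in x..y, f t :=
      (intervalIntegral.integral_add_adjacent_intervals (hf_ii 0 x hI0 hx)
        (hf_ii x y hx hy)).symm
    rw [h1, h2, hfdef] at *
    rw [h3]; ring
  have hab : y₁ ≤ y₂ := hy12.le
  have hIccsub : Set.Icc y₁ y₂ ⊆ Set.Icc (0:ℝ) H := Set.Icc_subset_Icc hy₁.1 hy₂.2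
  have hu'_eq : ∀ t ∈ Set.Icc y₁ y₂, u' t = - ∫ s in y₁..t, f s := by
    intro t ht
    rw [hF y₁ hy₁ t (hIccsub ht), hu'1]; ring
  -- the key quadratic identity
  have G_eq : ∀ y ∈ Set.Icc y₁ y₂, ∫ t in y₁..y, g t = -(u' y) ^ 2 := by
    intro y hy
    have h0 : Set.Icc y₁ y ⊆ Set.Icc y₁ y₂ := Set.Icc_subset_Icc le_rfl hy.2
    have e1 : ∀ t ∈ Set.uIcc y₁ y, g t = (-2) * ((∫ s in Set.Ioc y₁ t, f s) * f t) := by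
      intro t ht
      rw [Set.uIcc_of_le hy.1] at ht
      have h2 := hu'_eq t (h0 ht)
      rw [intervalIntegral.integral_of_le ht.1] at h2
      rw [hgdef, hfdef, hqdef]
      simp only []
      rw [h2]; ring
    have e2 : ∫ t in y₁..y, g t
        = ∫ t in y₁..y, (-2) * ((∫ s in Set.Ioc y₁ t, f s) * f t) :=
      intervalIntegral.integral_congr e1
    rw [e2, intervalIntegral.integral_const_mul, intervalIntegral.integral_of_le hy.1,
      sq_ident y₁ y hy.1 f (hf_int y₁ y hy₁ (hIccsub hy))]
    have h3 := hu'_eq y hy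
    rw [intervalIntegral.integral_of_le hy.1] at h3
    have h4 : ∫ s in Set.Ioc y₁ y, f s = -(u' y) := by rw [h3]; ring
    rw [h4]; ring
  have hGb : ∫ t in y₁..y₂, g t = 0 := by
    have h1 := G_eq y₂ ⟨hab, le_rfl⟩
    rw [hu'2] at h1
    simpa using h1
  have hGtail : ∀ t ∈ Set.Icc y₁ y₂, ∫ s in t..y₂, g s = (u' t) ^ 2 := by
    intro t ht
    have hadd := intervalIntegral.integral_add_adjacent_intervals
      (hg_ii y₁ t hy₁ (hIccsub ht)) (hg_ii t y₂ (hIccsub ht) hy₂)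
    have h1 := G_eq t ht
    rw [hGb, h1] at hadd
    linarith
  -- FTC for u^2
  have hφ : ∀ x ∈ Set.Icc (0:ℝ) H, ∀ y ∈ Set.Icc (0:ℝ) H, x ≤ y →
      ∫ t in x..y, 2 * u t * u' t = u y ^ 2 - u x ^ 2 := by
    intro x hx y hy hxy
    refine ftc_icc H (fun t => u t ^ 2) (fun t => 2 * u t * u' t) (fun z hz => ?_)
      ((continuousOn_const.mul hu_cont).mul hu'c) x y hx hy hxy
    have h1 : HasDerivWithinAt (fun t => u t ^ 2) _ _ _ := (hud z hz).pow 2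
    convert h1 using 1
    push_cast; ring
  -- projection onto [y₁, y₂]
  set proj : ℝ → ℝ := fun y => max y₁ (min y y₂) with hpdef
  have hproj_mem : ∀ y, proj y ∈ Set.Icc y₁ y₂ := by
    intro y
    exact ⟨le_max_left _ _, max_le hab (min_le_right _ _)⟩
  have hproj_mono : Monotone proj := fun x y hxy =>
    max_le_max le_rfl (min_le_min hxy le_rfl)
  have hproj_id : ∀ t ∈ Set.Icc y₁ y₂, proj t = t := by
    intro t ht
    rw [hpdef]
    simp only [min_eq_left ht.2, max_eq_right ht.1]
  -- GOAL 1
  have goal1 : u y₁ ^ 2 ≤ u y₂ ^ 2 := by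
    set m : ℝ → ℝ := fun y => (q (proj y))⁻¹ with hmdef
    have hm : Monotone m := by
      intro x y hxy
      have h1 : q (proj y) ≤ q (proj x) :=
        hq_anti (proj x) (hIccsub (hproj_mem x)) (proj y) (hIccsub (hproj_mem y))
          (hproj_mono hxy)
      exact inv_anti₀ (hqpos (proj y) (hIccsub (hproj_mem y))) h1
    have happ := ibp y₁ y₂ hab m g hm (hg_int y₁ y₂ hy₁ hy₂)
    have hL : ∫ y in Set.Ioc y₁ y₂, m y * g y = u y₂ ^ 2 - u y₁ ^ 2 := by
      have h1 : ∫ y in Set.Ioc y₁ y₂, m y * g y = ∫ y in Set.Ioc y₁ y₂, 2 * u y * u' y := by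
        refine setIntegral_congr_fun measurableSet_Ioc (fun t ht => ?_)
        have htI : t ∈ Set.Icc y₁ y₂ := Set.Ioc_subset_Icc_self ht
        rw [hmdef]
        simp only [hproj_id t htI]
        rw [hgdef]
        simp only []
        rw [inv_mul_cancel_left₀ (ne_of_gt (hqpos t (hIccsub htI)))]
      rw [h1, ← intervalIntegral.integral_of_le hab]
      exact hφ y₁ hy₁ y₂ hy₂ hab
    have hR0 : ∫ y in Set.Ioc y₁ y₂, g y = 0 := by
      rw [← intervalIntegral.integral_of_le hab]; exact hGb
    have hR1 : 0 ≤ ∫ t in Set.Ioc y₁ y₂, (∫ y in Set.Icc t y₂, g y) ∂hm.stieltjesFunction.measure := by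
      refine setIntegral_nonneg measurableSet_Ioc (fun t ht => ?_)
      have htI : t ∈ Set.Icc y₁ y₂ := Set.Ioc_subset_Icc_self ht
      rw [integral_Icc_eq_integral_Ioc, ← intervalIntegral.integral_of_le ht.2, hGtail t htI]
      positivity
    rw [hL, hR0, mul_zero, zero_add] at happ
    linarith [happ ▸ hR1]
  refine ⟨goal1, ?_⟩
  -- GOAL 2
  set m₂ : ℝ → ℝ := fun y => μ ^ 2 - lam / c (proj y) with hm2def
  have hm₂ : Monotone m₂ := by
    intro x y hxy
    have h1 : c (proj x) ≤ c (proj y) :=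
      hmono (hIccsub (hproj_mem x)) (hIccsub (hproj_mem y)) (hproj_mono hxy)
    have h2 : lam / c (proj y) ≤ lam / c (proj x) :=
      div_le_div_of_nonneg_left hlam.le (hcpos (proj x) (hIccsub (hproj_mem x))) h1
    simp only [hm2def]; linarith
  set s₂ := hm₂.stieltjesFunction with hs2def
  have hg2_int : IntegrableOn (fun t => 2 * u t * u' t) (Set.Ioc y₁ y₂) := by
    have hcont2 : ContinuousOn (fun t => 2 * u t * u' t) (Set.Icc y₁ y₂) :=
      ((continuousOn_const.mul hu_cont).mul hu'c).mono hIccsub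
    exact (hcont2.integrableOn_Icc).mono_set Set.Ioc_subset_Icc_self
  have happ2 := ibp y₁ y₂ hab m₂ (fun t => 2 * u t * u' t) hm₂ hg2_int
  have hL2 : ∫ y in Set.Ioc y₁ y₂, m₂ y * (2 * u y * u' y) = 0 := by
    have h1 : ∫ y in Set.Ioc y₁ y₂, m₂ y * (2 * u y * u' y)
        = ∫ y in Set.Ioc y₁ y₂, -(g y) := by
      refine setIntegral_congr_fun measurableSet_Ioc (fun t ht => ?_)
      have htI : t ∈ Set.Icc y₁ y₂ := Set.Ioc_subset_Icc_self ht
      rw [hm2def]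
      simp only [hproj_id t htI]
      rw [hgdef, hqdef]; ring
    rw [h1, integral_neg, ← intervalIntegral.integral_of_le hab, hGb, neg_zero]
  have hR2 : ∫ y in Set.Ioc y₁ y₂, 2 * u y * u' y = u y₂ ^ 2 - u y₁ ^ 2 := by
    rw [← intervalIntegral.integral_of_le hab]
    exact hφ y₁ hy₁ y₂ hy₂ hab
  have hfin2 : s₂.measure (Set.Ioc y₁ y₂) ≠ ⊤ := by
    rw [s₂.measure_Ioc]; exact ENNReal.ofReal_ne_top
  have hν2 : (s₂.measure (Set.Ioc y₁ y₂)).toReal = s₂ y₂ - s₂ y₁ := by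
    rw [s₂.measure_Ioc, ENNReal.toReal_ofReal (sub_nonneg.2 (s₂.mono hab))]
  haveI hfinI : IsFiniteMeasure (s₂.measure.restrict (Set.Ioc y₁ y₂)) := by
    constructor
    rw [Measure.restrict_apply_univ]
    exact lt_top_iff_ne_top.2 hfin2
  have hu2_int : Integrable (fun t => u t ^ 2) (s₂.measure.restrict (Set.Ioc y₁ y₂)) := by
    refine ⟨((hu_cont.mono (hsub y₁ y₂ hy₁ hy₂)).pow 2).aestronglyMeasurable measurableSet_Ioc, ?_⟩
    refine HasFiniteIntegral.restrict_of_bounded (C := Cu ^ 2) (lt_top_iff_ne_top.2 hfin2) ?_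
    refine (ae_restrict_iff' measurableSet_Ioc).2 (Filter.Eventually.of_forall fun t ht => ?_)
    have htH := hsub y₁ y₂ hy₁ hy₂ ht
    rw [Real.norm_eq_abs, abs_pow]
    exact pow_le_pow_left₀ (abs_nonneg _) (habs_u t htH) 2
  have hsplit : ∫ t in Set.Ioc y₁ y₂, (∫ y in Set.Icc t y₂, 2 * u y * u' y) ∂s₂.measure
      = (s₂ y₂ - s₂ y₁) * u y₂ ^ 2 - ∫ t in Set.Ioc y₁ y₂, u t ^ 2 ∂s₂.measure := by
    have h1 : ∀ t ∈ Set.Ioc y₁ y₂,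
        (∫ y in Set.Icc t y₂, 2 * u y * u' y) = u y₂ ^ 2 - u t ^ 2 := by
      intro t ht
      have htI : t ∈ Set.Icc y₁ y₂ := Set.Ioc_subset_Icc_self ht
      rw [integral_Icc_eq_integral_Ioc, ← intervalIntegral.integral_of_le ht.2]
      exact hφ t (hIccsub htI) y₂ hy₂ ht.2
    rw [setIntegral_congr_fun measurableSet_Ioc h1,
      integral_sub (integrable_const _) hu2_int, setIntegral_const, smul_eq_mul, measureReal_def, hν2]
  have hpos2 : 0 ≤ ∫ t in Set.Ioc y₁ y₂, u t ^ 2 ∂s₂.measure :=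
    setIntegral_nonneg measurableSet_Ioc (fun t _ => sq_nonneg _)
  -- combine
  have hkey : s₂ y₁ * (u y₂ ^ 2 - u y₁ ^ 2) + ((s₂ y₂ - s₂ y₁) * u y₂ ^ 2
      - ∫ t in Set.Ioc y₁ y₂, u t ^ 2 ∂s₂.measure) = 0 := by
    rw [← hsplit, ← hR2]
    rw [hL2] at happ2
    linarith [happ2]
  -- endpoint values of s₂
  have hs2a : m₂ y₁ ≤ s₂ y₁ := by
    rw [hs2def, hm₂.stieltjesFunction_eq]
    exact hm₂.le_rightLim le_rfl
  have hs2b : s₂ y₂ = m₂ y₂ := by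
    rw [hs2def, hm₂.stieltjesFunction_eq]
    refine rightLim_eq_of_tendsto (h := nhdsGT_neBot y₂) ?_
    have hev : ∀ᶠ y in nhdsWithin y₂ (Set.Ioi y₂), m₂ y = m₂ y₂ := by
      refine eventually_nhdsWithin_of_forall (fun y hy => ?_)
      have : proj y = y₂ := by
        rw [hpdef]
        simp only [min_eq_right (le_of_lt (Set.mem_Ioi.1 hy)), max_eq_right hab]
      rw [hm2def]
      simp only [this, hproj_id y₂ ⟨hab, le_rfl⟩]
    exact Filter.Tendsto.congr' (hev.mono fun y hy => hy.symm) tendsto_const_nhds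
  have hm2a : m₂ y₁ = μ ^ 2 - lam / c y₁ := by
    rw [hm2def]; simp only [hproj_id y₁ ⟨le_rfl, hab⟩]
  have hm2b : m₂ y₂ = μ ^ 2 - lam / c y₂ := by
    rw [hm2def]; simp only [hproj_id y₂ ⟨hab, le_rfl⟩]
  -- conclude q y₂ * u y₂ ^ 2 ≤ q y₁ * u y₁ ^ 2
  have hchain : m₂ y₁ * u y₁ ^ 2 ≤ m₂ y₂ * u y₂ ^ 2 := by
    have h1 : s₂ y₁ * u y₁ ^ 2 ≤ s₂ y₂ * u y₂ ^ 2 := by nlinarith [hkey, hpos2]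
    have h2 : m₂ y₁ * u y₁ ^ 2 ≤ s₂ y₁ * u y₁ ^ 2 :=
      mul_le_mul_of_nonneg_right hs2a (sq_nonneg _)
    rw [hs2b] at h1
    linarith
  rw [hm2a, hm2b] at hchain
  -- final numeric bound
  have hq2lb : lam * ε / (c_M * (c_M + ε)) ≤ q y₂ := by
    have h1 : μ ^ 2 ≤ lam / (c_M + ε) := by
      rw [le_div_iff₀ (by positivity)]
      calc μ ^ 2 * (c_M + ε) = (c_M + ε) * μ ^ 2 := by ring
        _ ≤ lam := hlam1
    have h2 : lam / c_M - lam / (c_M + ε) = lam * ε / (c_M * (c_M + ε)) := by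
      field_simp; ring
    have h3 := hqlb y₂ hy₂
    have h4 : lam * ε / (c_M * (c_M + ε)) ≤ lam / c_M - μ ^ 2 := by
      rw [← h2]; linarith
    linarith
  have hq1ub : q y₁ ≤ lam / c_m := hqub y₁ hy₁
  have hq12 : q y₂ * u y₂ ^ 2 ≤ q y₁ * u y₁ ^ 2 := by
    show (lam / c y₂ - μ ^ 2) * u y₂ ^ 2 ≤ (lam / c y₁ - μ ^ 2) * u y₁ ^ 2
    nlinarith [hchain]
  have hLpos : 0 < lam * ε / (c_M * (c_M + ε)) := by positivity
  have h5 : (lam * ε / (c_M * (c_M + ε))) * u y₂ ^ 2 ≤ (lam / c_m) * u y₁ ^ 2 := by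
    have h6 : (lam * ε / (c_M * (c_M + ε))) * u y₂ ^ 2 ≤ q y₂ * u y₂ ^ 2 :=
      mul_le_mul_of_nonneg_right hq2lb (sq_nonneg _)
    have h7 : q y₁ * u y₁ ^ 2 ≤ (lam / c_m) * u y₁ ^ 2 :=
      mul_le_mul_of_nonneg_right hq1ub (sq_nonneg _)
    linarith
  have h8 : u y₂ ^ 2 ≤ (c_M * (c_M + ε) / (c_m * ε)) * u y₁ ^ 2 := by
    have h8' : u y₂ ^ 2 * (lam * ε / (c_M * (c_M + ε))) ≤ (lam / c_m) * u y₁ ^ 2 := by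
      nlinarith [h5]
    have h9 : u y₂ ^ 2 ≤ ((lam / c_m) * u y₁ ^ 2) / (lam * ε / (c_M * (c_M + ε))) :=
      (le_div_iff₀ hLpos).2 h8'
    have h10 : ((lam / c_m) * u y₁ ^ 2) / (lam * ε / (c_M * (c_M + ε)))
        = (c_M * (c_M + ε) / (c_m * ε)) * u y₁ ^ 2 := by
      field_simp
    rw [h10] at h9
    exact h9
  nlinarith [h8, sq_nonneg (u y₁)]
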